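/- arXiv:2511.16387 — 2 statements merged into one kernel-verified Lean document; each statement's English description precedes it below -/
import Mathlib

section
/- Let ζ_{1,j} ∈ L²(∂D) satisfy the recursion: ∫_{∂D}ζ_{1,j} = t_j, (1/(2π))t_{j+1} + τ t_j + S_D[ζ_{1,j}] = 0 for j ≥ 1, where the solution operator has norm bound ‖ζ_{1,j}‖_{L²} + |(1/(2π))t_{j+1} + τ t_j| ≤ C|t_j|. Then for all j ≥ 1: ‖ζ_{1,j}‖_{L²(∂D)} ≤ C(2π(C+|τ|))^{j−1}|t₁| and |t_{j+1}| ≤ (2π(C+|τ|))^j |t₁|. Consequently, if |2π(C+|τ|)/ln k| < 1, the series ζ_{1,0} + Σ_{j≥1} (ln k)^{-j} ζ_{1,j} converges in L²(∂D). -/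
open Real

noncomputable section

/-- Iterative bounds for the expansion coefficients:
if `‖ζ_j‖ + |(1/(2π)) t_{j+1} + τ t_j| ≤ C |t_j|` for `j ≥ 1`, then
`‖ζ_j‖ ≤ C (2π(C+|τ|))^{j−1} |t₁|` and `|t_{j+1}| ≤ (2π(C+|τ|))^j |t₁|`;
consequently, if `|2π(C+|τ|)/ln k| < 1`, the series
`Σ_{j≥1} (ln k)^{-j} ζ_j` converges in `L²(∂D)`. -/
theorem stmt_12
    (X : Type*) [NormedAddCommGroup X] [NormedSpace ℂ X] [CompleteSpace X]
    (ζ : ℕ → X) (t : ℕ → ℂ) (C : ℝ) (hC : 0 < C) (τ k : ℂ)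
    (hbound : ∀ j : ℕ, 1 ≤ j →
      ‖ζ j‖ + ‖((2 * Real.pi)⁻¹ : ℂ) * t (j + 1) + τ * t j‖
        ≤ C * ‖t j‖) :
    (∀ j : ℕ, 1 ≤ j →
      ‖ζ j‖ ≤ C * (2 * Real.pi * (C + ‖τ‖)) ^ (j - 1) * ‖t 1‖
      ∧ ‖t (j + 1)‖
          ≤ (2 * Real.pi * (C + ‖τ‖)) ^ j * ‖t 1‖)
    ∧ (‖(2 * Real.pi * (C + ‖τ‖) : ℂ) / Complex.log k‖ < 1 →
        Summable (fun j : ℕ => ((Complex.log k)⁻¹ ^ (j + 1)) • ζ (j + 1))) := by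
  set B : ℝ := 2 * Real.pi * (C + ‖τ‖) with hB
  have hBpos : 0 < B := by
    apply mul_pos (by positivity)
    have := norm_nonneg τ
    linarith
  clear_value B
  -- step bound on t
  have hstep : ∀ j : ℕ, 1 ≤ j → ‖t (j + 1)‖ ≤ B * ‖t j‖ := by
    intro j hj
    have h := hbound j hj
    have hz : (0:ℝ) ≤ ‖ζ j‖ := norm_nonneg _
    have h1 : ‖((2 * Real.pi)⁻¹ : ℂ) * t (j + 1) + τ * t j‖
        ≤ C * ‖t j‖ := by linarith
    have h2 : ‖((2 * Real.pi)⁻¹ : ℂ) * t (j + 1)‖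
        ≤ ‖((2 * Real.pi)⁻¹ : ℂ) * t (j + 1) + τ * t j‖
          + ‖τ * t j‖ := by
      have h := norm_add_le
        (((2 * Real.pi)⁻¹ : ℂ) * t (j + 1) + τ * t j) (-(τ * t j))
      simpa [add_assoc] using h
    have h3 : ‖((2 * Real.pi)⁻¹ : ℂ) * t (j + 1)‖
        = (2 * Real.pi)⁻¹ * ‖t (j + 1)‖ := by
      rw [norm_mul]
      congr 1
      rw [show ((2 * Real.pi)⁻¹ : ℂ) = ((((2 * Real.pi)⁻¹ : ℝ)) : ℂ) by push_cast; ring]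
      rw [Complex.norm_real, Real.norm_eq_abs, abs_of_nonneg (by positivity)]
    have h4 : ‖τ * t j‖ = ‖τ‖ * ‖t j‖ := norm_mul _ _
    have hpi : 0 < 2 * Real.pi := by positivity
    rw [h3, h4] at h2
    have : (2 * Real.pi)⁻¹ * ‖t (j + 1)‖
        ≤ (C + ‖τ‖) * ‖t j‖ := by nlinarith
    calc ‖t (j + 1)‖
        = (2 * Real.pi) * ((2 * Real.pi)⁻¹ * ‖t (j + 1)‖) := by
          field_simp
      _ ≤ (2 * Real.pi) * ((C + ‖τ‖) * ‖t j‖) := by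
          apply mul_le_mul_of_nonneg_left this hpi.le
      _ = B * ‖t j‖ := by rw [hB]; ring
  -- geometric bound on t
  have ht : ∀ j : ℕ, ‖t (j + 1)‖ ≤ B ^ j * ‖t 1‖ := by
    intro j
    induction j with
    | zero => simp
    | succ m ih =>
      calc ‖t (m + 2)‖ ≤ B * ‖t (m + 1)‖ :=
            hstep (m + 1) (Nat.le_add_left 1 m)
        _ ≤ B * (B ^ m * ‖t 1‖) :=
            mul_le_mul_of_nonneg_left ih hBpos.le
        _ = B ^ (m + 1) * ‖t 1‖ := by ring
  have hζ : ∀ j : ℕ, 1 ≤ j → ‖ζ j‖ ≤ C * B ^ (j - 1) * ‖t 1‖ := by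
    intro j hj
    obtain ⟨m, rfl⟩ := Nat.exists_eq_add_of_le hj
    have h := hbound (1 + m) hj
    have habs : (0:ℝ) ≤ ‖((2 * Real.pi)⁻¹ : ℂ) * t (1 + m + 1) + τ * t (1 + m)‖ :=
      norm_nonneg _
    have h1 : ‖ζ (1 + m)‖ ≤ C * ‖t (1 + m)‖ := by linarith
    have h2 : ‖t (1 + m)‖ ≤ B ^ m * ‖t 1‖ := by
      have := ht m; rwa [show m + 1 = 1 + m by ring] at this
    calc ‖ζ (1 + m)‖ ≤ C * (B ^ m * ‖t 1‖) :=
          h1.trans (mul_le_mul_of_nonneg_left h2 hC.le)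
      _ = C * B ^ (1 + m - 1) * ‖t 1‖ := by
          rw [show 1 + m - 1 = m by omega]; ring
  constructor
  · intro j hj
    refine ⟨hζ j hj, ?_⟩
    have := ht j
    calc ‖t (j + 1)‖ ≤ B ^ j * ‖t 1‖ := this
      _ = B ^ j * ‖t 1‖ := rfl
  · intro hr
    set L := Complex.log k with hL
    have hcast : (2 * Real.pi * (C + ‖τ‖) : ℂ) = ((B : ℝ) : ℂ) := by
      push_cast [hB]; ring
    rw [hcast] at hr
    have hr' : B * (‖L‖)⁻¹ < 1 := by
      rwa [norm_div, Complex.norm_real, Real.norm_eq_abs, abs_of_nonneg hBpos.le,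
        div_eq_mul_inv] at hr
    set r : ℝ := B * (‖L‖)⁻¹ with hrdef
    have hrnn : 0 ≤ r := by positivity
    apply Summable.of_norm_bounded
      (g := fun j : ℕ => (C * ‖t 1‖ * (‖L‖)⁻¹) * r ^ j)
    · exact (summable_geometric_of_lt_one hrnn hr').mul_left _
    · intro j
      rw [norm_smul, norm_pow]
      have hL' : ‖(L)⁻¹‖ = (‖L‖)⁻¹ := by
        rw [norm_inv]
      rw [hL']
      have hζb : ‖ζ (j + 1)‖ ≤ C * B ^ j * ‖t 1‖ := by
        have := hζ (j + 1) (Nat.le_add_left 1 j)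
        simpa using this
      have key : (‖L‖)⁻¹ ^ (j + 1) * (C * B ^ j * ‖t 1‖)
          = (C * ‖t 1‖ * (‖L‖)⁻¹) * r ^ j := by
        rw [hrdef, mul_pow, pow_succ]
        ring
      calc (‖L‖)⁻¹ ^ (j + 1) * ‖ζ (j + 1)‖
          ≤ (‖L‖)⁻¹ ^ (j + 1) * (C * B ^ j * ‖t 1‖) :=
            mul_le_mul_of_nonneg_left hζb (by positivity)
        _ = (C * ‖t 1‖ * (‖L‖)⁻¹) * r ^ j := key
end
end

section
/- Let F : (0, T] → [0, ∞) be nondecreasing and suppose there are constants c₀ > 0, A ≥ 0 such that for all 0 < t < s ≤ T: F(t) ≤ (1/4 + c₀ δ²/(s−t)²) F(s) + A(s−t)² s, where δ > 0 satisfies δ ≤ 1. Then with t_i = δ + 2√(c₀) i δ and m₀ = ⌈1/(4√(c₀ δ))⌉ + 1, iterating gives F(δ) ≤ (1/2)^{m₀} F(t_{m₀}) + C A δ³ for a constant C depending only on c₀, provided t_{m₀} ≤ T. -/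
open Real

noncomputable section

set_option maxHeartbeats 800000

/-- Abstract iteration lemma: if `F : (0,T] → [0,∞)` is nondecreasing and
`F(t) ≤ (1/4 + c₀δ²/(s−t)²) F(s) + A(s−t)² s` for all `0 < t < s ≤ T`, with
`0 < δ ≤ 1`, then with `t_i = δ + 2√c₀ i δ` and `m₀ = ⌈1/(4√(c₀δ))⌉ + 1`
(assuming `t_{m₀} ≤ T`), iteration gives
`F(δ) ≤ (1/2)^{m₀} F(t_{m₀}) + C A δ³`, with `C` depending only on `c₀`. -/
theorem stmt_19 (c₀ : ℝ) (hc₀ : 0 < c₀) :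
    ∃ C : ℝ, 0 < C ∧
      ∀ (T A δ : ℝ) (F : ℝ → ℝ), 0 < T → 0 ≤ A → 0 < δ → δ ≤ 1 →
        (∀ x ∈ Set.Ioc (0 : ℝ) T, 0 ≤ F x) →
        MonotoneOn F (Set.Ioc (0 : ℝ) T) →
        (∀ t s : ℝ, 0 < t → t < s → s ≤ T →
          F t ≤ (1 / 4 + c₀ * δ ^ 2 / (s - t) ^ 2) * F s + A * (s - t) ^ 2 * s) →
        δ + 2 * Real.sqrt c₀ * ((⌈1 / (4 * Real.sqrt (c₀ * δ))⌉₊ : ℝ) + 1) * δ ≤ T →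
        F δ ≤ (1 / 2 : ℝ) ^ (⌈1 / (4 * Real.sqrt (c₀ * δ))⌉₊ + 1) *
            F (δ + 2 * Real.sqrt c₀ * ((⌈1 / (4 * Real.sqrt (c₀ * δ))⌉₊ : ℝ) + 1) * δ)
          + C * A * δ ^ 3 := by
  set q : ℝ := Real.sqrt c₀ with hq
  have hqpos : 0 < q := Real.sqrt_pos.mpr hc₀
  have hqsq : q ^ 2 = c₀ := Real.sq_sqrt hc₀.le
  set K : ℝ := 4 * c₀ * (1 + 2 * q) with hK
  have hKpos : 0 < K := by positivity
  refine ⟨4 * K, by positivity, ?_⟩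
  intro T A δ F hT hA hδ hδ1 hFnn hFmono hrec hTm
  have hqδ : 0 < q * δ := by positivity
  -- general claim
  have claim : ∀ m : ℕ, δ + 2 * q * (m : ℝ) * δ ≤ T →
      F δ ≤ (1/2 : ℝ) ^ m * F (δ + 2 * q * (m : ℝ) * δ)
        + K * A * δ ^ 3 * (4 - (1/2 : ℝ) ^ m * (2 * (m : ℝ) + 4)) := by
    intro m
    induction m with
    | zero => intro _; simp
    | succ m ih =>
      intro hT1
      have hmnn : (0:ℝ) ≤ (m:ℝ) := Nat.cast_nonneg m
      have hm1 : ((m : ℝ) + 1) ≥ 1 := by linarith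
      have hTm' : δ + 2 * q * (m : ℝ) * δ ≤ T := by
        push_cast at hT1 ⊢; nlinarith [hqδ]
      have hIH := ih hTm'
      set t : ℝ := δ + 2 * q * (m : ℝ) * δ with ht
      set s : ℝ := δ + 2 * q * ((m : ℝ) + 1) * δ with hs
      clear_value t s
      have hst : s - t = 2 * q * δ := by rw [hs, ht]; ring
      have htpos : 0 < t := by rw [ht]; positivity
      have hts : t < s := by rw [ht, hs]; nlinarith [hqδ]
      have hsT : s ≤ T := by push_cast at hT1; rw [hs]; exact_mod_cast hT1
      have hstep := hrec t s htpos hts hsT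
      rw [hst] at hstep
      have hden : (2 * q * δ) ^ 2 = 4 * c₀ * δ ^ 2 := by nlinarith
      have hcoef : c₀ * δ ^ 2 / (2 * q * δ) ^ 2 = 1 / 4 := by
        rw [hden]; field_simp
      rw [hcoef, hden] at hstep
      -- bound the additive term
      have hsb : s ≤ (1 + 2 * q) * ((m : ℝ) + 1) * δ := by
        rw [hs]; nlinarith [mul_nonneg hmnn hδ.le, hqpos, mul_nonneg (mul_nonneg hqpos.le hmnn) hδ.le]
      have hAs : A * (4 * c₀ * δ ^ 2) * s ≤ K * A * δ ^ 3 * ((m : ℝ) + 1) := by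
        have h1 : A * (4 * c₀ * δ ^ 2) * s ≤ A * (4 * c₀ * δ ^ 2) * ((1 + 2 * q) * ((m : ℝ) + 1) * δ) := by
          apply mul_le_mul_of_nonneg_left hsb (by positivity)
        calc A * (4 * c₀ * δ ^ 2) * s ≤ A * (4 * c₀ * δ ^ 2) * ((1 + 2 * q) * ((m : ℝ) + 1) * δ) := h1
          _ = K * A * δ ^ 3 * ((m : ℝ) + 1) := by rw [hK]; ring
      have hFs : F t ≤ (1/2) * F s + K * A * δ ^ 3 * ((m : ℝ) + 1) := by
        have : (1 / 4 + 1 / 4 : ℝ) * F s = (1/2) * F s := by ring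
        linarith [hstep, hAs]
      set p : ℝ := (1/2 : ℝ) ^ m with hp
      have hppos : 0 < p := by positivity
      have hpm : p * F t ≤ p * ((1/2) * F s + K * A * δ ^ 3 * ((m : ℝ) + 1)) :=
        mul_le_mul_of_nonneg_left hFs hppos.le
      have hgoalform : (1/2 : ℝ) ^ (m + 1) = (1/2) * p := by rw [hp]; ring
      push_cast
      rw [hgoalform, show δ + 2 * q * ((m:ℝ) + 1) * δ = s from hs.symm]
      nlinarith [hIH, hpm]
  -- apply the claim at m₀
  set m₀ : ℕ := ⌈1 / (4 * Real.sqrt (c₀ * δ))⌉₊ + 1 with hm₀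
  have hTm' : δ + 2 * q * (m₀ : ℝ) * δ ≤ T := by
    push_cast [hm₀]
    exact hTm
  have h := claim m₀ hTm'
  have hFnneg : 0 ≤ F (δ + 2 * q * (m₀ : ℝ) * δ) := by
    apply hFnn
    constructor
    · positivity
    · exact hTm'
  have hfac : (4 - (1/2 : ℝ) ^ m₀ * (2 * (m₀ : ℝ) + 4)) ≤ 4 := by
    have : 0 ≤ (1/2 : ℝ) ^ m₀ * (2 * (m₀ : ℝ) + 4) := by positivity
    linarith
  have keq : (δ + 2 * Real.sqrt c₀ * ((⌈1 / (4 * Real.sqrt (c₀ * δ))⌉₊ : ℝ) + 1) * δ)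
      = δ + 2 * q * (m₀ : ℝ) * δ := by
    push_cast [hm₀]
    ring
  have : K * A * δ ^ 3 * (4 - (1/2 : ℝ) ^ m₀ * (2 * (m₀ : ℝ) + 4)) ≤ 4 * K * A * δ ^ 3 := by
    have hK3 : 0 ≤ K * A * δ ^ 3 := by positivity
    nlinarith
  rw [keq]
  calc F δ ≤ (1/2 : ℝ) ^ m₀ * F (δ + 2 * q * (m₀ : ℝ) * δ)
        + K * A * δ ^ 3 * (4 - (1/2 : ℝ) ^ m₀ * (2 * (m₀ : ℝ) + 4)) := h
    _ ≤ (1/2 : ℝ) ^ m₀ * F (δ + 2 * q * (m₀ : ℝ) * δ) + 4 * K * A * δ ^ 3 := by linarith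
end
end
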